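/- arXiv:1402.1197 — 2 statements merged into one kernel-verified Lean document; each statement's English description precedes it below -/
import Mathlib

section
/- Generalized Jacobi identity: for all multilinear maps f ∈ C^m, g ∈ C^n, h ∈ C^p, the Jacobiator J(f⊗g⊗h) := (−1)^{|f||h|}[[f,g],h] + (−1)^{|g||f|}[[g,h],f] + (−1)^{|h||g|}[[h,f],g] satisfies J(f⊗g⊗h) = (−1)^{|f||h|}[(f,g,h) − (−1)^{|g||h|}(f,h,g)] + (−1)^{|g||f|}[(g,h,f) − (−1)^{|h||f|}(g,f,h)] + (−1)^{|h||g|}[(h,f,g) − (−1)^{|f||g|}(h,g,f)], where |f| = m−1, |g| = n−1, |h| = p−1. -/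
open Finset

section OperadPrelude

variable {K : Type*} [CommRing K] {L : Type*} [AddCommGroup L] [Module K L]

/-- `C K L n`: the `K`-module of `n`-multilinear maps `L^n → L`
(the degree-`n` component of the endomorphism operad of `L`). -/
abbrev C (K L : Type*) [CommRing K] [AddCommGroup L] [Module K L] (n : ℕ) :=
  MultilinearMap K (fun _ : Fin n => L) L

/-- The extension of an `n`-ary multilinear operation to sequences `ℕ → L`:
it evaluates `f` on the first `n` entries of the sequence.  Two `n`-ary
multilinear operations are equal iff their extensions are equal, so operadic
identities are stated as identities between extensions. -/
def ex {n : ℕ} (f : C K L n) : (ℕ → L) → L := fun x => f fun j => x j.1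

/-- The sign `(-1)^e` for an integer exponent `e`. -/
def sgn (e : ℤ) : ℤ := (((-1 : ℤˣ) ^ e : ℤˣ) : ℤ)

/-- Partial composition `f ∘ᵢ g`, where `n = deg g`:
`(f ∘ᵢ g)(x₀, x₁, …) = (-1)^{i(n-1)} f(x₀,…,x_{i-1}, g(x_i,…,x_{i+n-1}), x_{i+n},…)`. -/
def pc (n i : ℕ) (f g : (ℕ → L) → L) : (ℕ → L) → L :=
  fun x => sgn ((i : ℤ) * ((n : ℤ) - 1)) •
    f fun j => if j < i then x j else if j = i then g (fun k => x (i + k)) else x (j + n - 1)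

/-- Total composition `f ∘ g := Σ_{i=0}^{m-1} f ∘ᵢ g`, where `m = deg f`, `n = deg g`. -/
def tc (m n : ℕ) (f g : (ℕ → L) → L) : (ℕ → L) → L :=
  fun x => ∑ i ∈ Finset.range m, pc n i f g x

/-- The associator `(h, f, g) := (h ∘ f) ∘ g − h ∘ (f ∘ g)` of the total composition,
where `m = deg h`, `n = deg f`, `p = deg g`. -/
def assoc (m n p : ℕ) (h f g : (ℕ → L) → L) : (ℕ → L) → L :=
  fun x => tc (m + n - 1) p (tc m n h f) g x - tc m (n + p - 1) h (tc n p f g) x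

/-- The brace `⟨h|fg⟩ := Σ (h ∘ᵢ f) ∘ⱼ g`, summed over `0 ≤ i ≤ m-2`,
`i + n ≤ j ≤ m + n - 2`, where `m = deg h`, `n = deg f`, `p = deg g`. -/
def br2 (m n p : ℕ) (h f g : (ℕ → L) → L) : (ℕ → L) → L :=
  fun x => ∑ i ∈ Finset.range (m - 1), ∑ j ∈ Finset.Icc (i + n) (m + n - 2),
    pc p j (pc n i h f) g x

/-- The triple brace `⟨h|fgb⟩ := Σ ((h ∘ᵢ f) ∘ⱼ g) ∘ₖ b`, summed over `0 ≤ i ≤ m-3`,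
`i + n ≤ j ≤ m + n - 3`, `j + p ≤ k ≤ m + n + p - 3`, where
`m = deg h`, `n = deg f`, `p = deg g`, `q = deg b`. -/
def br3 (m n p q : ℕ) (h f g b : (ℕ → L) → L) : (ℕ → L) → L :=
  fun x => ∑ i ∈ Finset.range (m - 2), ∑ j ∈ Finset.Icc (i + n) (m + n - 3),
    ∑ k ∈ Finset.Icc (j + p) (m + n + p - 3),
      pc q k (pc p j (pc n i h f) g) b x

/-- The Gerstenhaber bracket `[f,g] := f ∘ g − (-1)^{|f||g|} g ∘ f`,
where `m = deg f`, `n = deg g`, `|f| = m - 1`, `|g| = n - 1`. -/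
def gb (m n : ℕ) (f g : (ℕ → L) → L) : (ℕ → L) → L :=
  fun x => tc m n f g x - sgn (((m : ℤ) - 1) * ((n : ℤ) - 1)) • tc n m g f x

/-- The cup product `f ⌣ g := (-1)^{deg f} (μ ∘₀ f) ∘_{deg f} g`,
where `m = deg f`, `n = deg g`. -/
def cup (μ : C K L 2) (m n : ℕ) (f g : (ℕ → L) → L) : (ℕ → L) → L :=
  fun x => sgn (m : ℤ) • pc n m (pc m 0 (ex μ) f) g x

/-- The coboundary operator `δ_μ f := −[f, μ]`, where `m = deg f`. -/
def delta (μ : C K L 2) (m : ℕ) (f : (ℕ → L) → L) : (ℕ → L) → L :=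
  fun x => - gb m 2 f (ex μ) x


-- sign lemmas
lemma sgn_add (x y : ℤ) : sgn (x + y) = sgn x * sgn y := by
  simp [sgn, zpow_add]

lemma sgn_pow_two (x : ℤ) : sgn x ^ 2 = 1 := by
  have : ((-1 : ℤˣ) ^ x) * ((-1 : ℤˣ) ^ x) = 1 := Int.units_mul_self _
  simp [sgn, pow_two, ← Units.val_mul, this]

-- left splitting
lemma tc_split_left (M N : ℕ) (F F1 F2 H : (ℕ → L) → L) (c : ℤ)
    (hF : ∀ y, F y = F1 y - c • F2 y) (x : ℕ → L) :
    tc M N F H x = tc M N F1 H x - c • tc M N F2 H x := by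
  unfold tc pc
  simp only [hF, smul_sub, Finset.sum_sub_distrib, Finset.smul_sum, smul_comm c]

-- right splitting, via multilinearity
lemma map_update_sub_zsmul (p : ℕ) (h : C K L p) (v : Fin p → L) (ι : Fin p)
    (z1 z2 : L) (c : ℤ) :
    h (Function.update v ι (z1 - c • z2))
      = h (Function.update v ι z1) - c • h (Function.update v ι z2) := by
  let A : L →+ L := AddMonoidHom.mk' (fun z => h (Function.update v ι z))
    (fun a b => h.map_update_add v ι a b)
  have : ∀ z, A z = h (Function.update v ι z) := fun z => rfl
  rw [← this, ← this, ← this, A.map_sub, A.map_zsmul]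

lemma pc_split_right (p : ℕ) (h : C K L p) (q i : ℕ) (hi : i < p)
    (G G1 G2 : (ℕ → L) → L) (c : ℤ)
    (hG : ∀ y, G y = G1 y - c • G2 y) (x : ℕ → L) :
    pc q i (ex h) G x = pc q i (ex h) G1 x - c • pc q i (ex h) G2 x := by
  have key : ∀ w : L,
      (ex h) (fun j => if j < i then x j else if j = i then w else x (j + q - 1))
        = h (Function.update (fun j : Fin p => if (j : ℕ) < i then x j else x (j + q - 1))
            ⟨i, hi⟩ w) := by
    intro w
    unfold ex
    congr 1
    funext j
    rcases eq_or_ne (j : ℕ) i with hj | hj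
    · have hj' : j = ⟨i, hi⟩ := Fin.ext hj
      subst hj'
      simp
    · rw [Function.update_of_ne (by simpa [Fin.ext_iff] using hj)]
      simp [hj]
  unfold pc
  rw [key, key, key, hG, map_update_sub_zsmul, smul_sub, smul_comm]

lemma tc_split_right (p : ℕ) (h : C K L p) (q : ℕ)
    (G G1 G2 : (ℕ → L) → L) (c : ℤ)
    (hG : ∀ y, G y = G1 y - c • G2 y) (x : ℕ → L) :
    tc p q (ex h) G x = tc p q (ex h) G1 x - c • tc p q (ex h) G2 x := by
  unfold tc
  rw [show (∑ i ∈ Finset.range p, pc q i (ex h) G x)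
      = ∑ i ∈ Finset.range p, (pc q i (ex h) G1 x - c • pc q i (ex h) G2 x) from
    Finset.sum_congr rfl fun i hi =>
      pc_split_right p h q i (Finset.mem_range.mp hi) G G1 G2 c hG x,
    Finset.sum_sub_distrib, Finset.smul_sum]

lemma tc_zero_right (p : ℕ) (h : C K L p) (q : ℕ) (G : (ℕ → L) → L)
    (hG : ∀ y, G y = 0) (x : ℕ → L) : tc p q (ex h) G x = 0 := by
  unfold tc
  refine Finset.sum_eq_zero fun i hi => ?_
  have hip := Finset.mem_range.mp hi
  unfold pc ex
  rw [h.map_coord_zero ⟨i, hip⟩ (by simp [hG]), smul_zero]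

lemma sigma_fix (P : ℕ) (h : C K L P) (m n : ℕ) (F G : (ℕ → L) → L) (x : ℕ → L)
    (e c : ℤ) :
    sgn ((((m + n - 1 : ℕ) : ℤ) - 1) * e) •
        (tc P (m + n - 1) (ex h) (tc m n F G) x
          - c • tc P (m + n - 1) (ex h) (tc n m G F) x)
      = (sgn (((m : ℤ) - 1) * e) * sgn (((n : ℤ) - 1) * e)) •
        (tc P (m + n - 1) (ex h) (tc m n F G) x
          - c • tc P (m + n - 1) (ex h) (tc n m G F) x) := by
  rcases Nat.eq_zero_or_pos (m + n) with h0 | h1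
  · have hm : m = 0 := by omega
    have hn : n = 0 := by omega
    subst hm; subst hn
    rw [tc_zero_right P h _ (tc 0 0 F G) (fun y => by simp [tc]) x,
      tc_zero_right P h _ (tc 0 0 G F) (fun y => by simp [tc]) x]
    simp
  · have hc : ((m + n - 1 : ℕ) : ℤ) = (m : ℤ) + n - 1 := by omega
    rw [hc, show ((m : ℤ) + n - 1 - 1) * e = ((m : ℤ) - 1) * e + ((n : ℤ) - 1) * e from by ring,
      sgn_add]


lemma gb_apply (m n : ℕ) (F G : (ℕ → L) → L) (x : ℕ → L) :
    gb m n F G x = tc m n F G x - sgn (((m : ℤ) - 1) * ((n : ℤ) - 1)) • tc n m G F x := rfl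

lemma assoc_apply (m n p : ℕ) (H F G : (ℕ → L) → L) (x : ℕ → L) :
    assoc m n p H F G x
      = tc (m + n - 1) p (tc m n H F) G x - tc m (n + p - 1) H (tc n p F G) x := rfl

/-- the generalized Jacobi identity, expressing the Jacobiator of
the Gerstenhaber bracket via the associators of the total composition. -/
theorem generalized_jacobi_identity
    {m n p : ℕ} (f : C K L m) (g : C K L n) (h : C K L p) :
    sgn (((m : ℤ) - 1) * ((p : ℤ) - 1)) •
        gb (m + n - 1) p (gb m n (ex f) (ex g)) (ex h)
      + sgn (((n : ℤ) - 1) * ((m : ℤ) - 1)) •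
          gb (n + p - 1) m (gb n p (ex g) (ex h)) (ex f)
      + sgn (((p : ℤ) - 1) * ((n : ℤ) - 1)) •
          gb (p + m - 1) n (gb p m (ex h) (ex f)) (ex g)
    = sgn (((m : ℤ) - 1) * ((p : ℤ) - 1)) •
          (assoc m n p (ex f) (ex g) (ex h)
            - sgn (((n : ℤ) - 1) * ((p : ℤ) - 1)) • assoc m p n (ex f) (ex h) (ex g))
        + sgn (((n : ℤ) - 1) * ((m : ℤ) - 1)) •
            (assoc n p m (ex g) (ex h) (ex f)
              - sgn (((p : ℤ) - 1) * ((m : ℤ) - 1)) • assoc n m p (ex g) (ex f) (ex h))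
        + sgn (((p : ℤ) - 1) * ((n : ℤ) - 1)) •
            (assoc p m n (ex h) (ex f) (ex g)
              - sgn (((m : ℤ) - 1) * ((n : ℤ) - 1)) • assoc p n m (ex h) (ex g) (ex f)) := by
  funext x
  simp only [Pi.add_apply, Pi.smul_apply, Pi.sub_apply, gb_apply, assoc_apply]
  rw [tc_split_left (m + n - 1) p (gb m n (ex f) (ex g)) (tc m n (ex f) (ex g))
      (tc n m (ex g) (ex f)) (ex h) _ (fun y => rfl) x,
    tc_split_left (n + p - 1) m (gb n p (ex g) (ex h)) (tc n p (ex g) (ex h))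
      (tc p n (ex h) (ex g)) (ex f) _ (fun y => rfl) x,
    tc_split_left (p + m - 1) n (gb p m (ex h) (ex f)) (tc p m (ex h) (ex f))
      (tc m p (ex f) (ex h)) (ex g) _ (fun y => rfl) x,
    tc_split_right p h (m + n - 1) (gb m n (ex f) (ex g)) (tc m n (ex f) (ex g))
      (tc n m (ex g) (ex f)) _ (fun y => rfl) x,
    tc_split_right m f (n + p - 1) (gb n p (ex g) (ex h)) (tc n p (ex g) (ex h))
      (tc p n (ex h) (ex g)) _ (fun y => rfl) x,
    tc_split_right n g (p + m - 1) (gb p m (ex h) (ex f)) (tc p m (ex h) (ex f))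
      (tc m p (ex f) (ex h)) _ (fun y => rfl) x,
    sigma_fix p h m n (ex f) (ex g) x ((p : ℤ) - 1) _,
    sigma_fix m f n p (ex g) (ex h) x ((m : ℤ) - 1) _,
    sigma_fix n g p m (ex h) (ex f) x ((n : ℤ) - 1) _]
  simp only [show n + m - 1 = m + n - 1 from by omega,
    show p + n - 1 = n + p - 1 from by omega,
    show m + p - 1 = p + m - 1 from by omega]
  match_scalars
  all_goals (ring_nf; try simp only [sgn_pow_two, one_mul, mul_one, neg_neg]; try ring_nf)

end OperadPrelude
end

section
/- The coboundary operator is a right derivation of the commutator algebra: for every bilinear map μ ∈ C² and all multilinear maps f ∈ C^m, g ∈ C^n, δ_μ [f,g] = (−1)^{|g|} [δ_μ f, g] + [f, δ_μ g], where |g| = n − 1. -/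
open Finset

section OperadPrelude

variable {K : Type*} [CommRing K] {L : Type*} [AddCommGroup L] [Module K L]

section Aux
set_option linter.unusedSectionVars false

variable {K : Type*} [CommRing K] {L : Type*} [AddCommGroup L] [Module K L]

lemma op_sgn_add (a b : ℤ) : sgn (a + b) = sgn a * sgn b := by
  unfold sgn; rw [zpow_add, Units.val_mul]

lemma op_sgn_zero : sgn 0 = 1 := rfl

lemma op_sgn_two_mul (b : ℤ) : sgn (2 * b) = 1 := by
  unfold sgn
  rw [zpow_mul]
  rw [show ((-1:ℤˣ))^(2:ℤ) = 1 from by rw [zpow_two]; simp]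
  rw [one_zpow]
  rfl

lemma op_sgn_add_two_mul (a b : ℤ) : sgn (a + 2 * b) = sgn a := by
  rw [op_sgn_add, op_sgn_two_mul, mul_one]

lemma op_sgn_cases (a : ℤ) : sgn a = 1 ∨ sgn a = -1 := by
  unfold sgn
  rcases Int.units_eq_one_or ((-1 : ℤˣ) ^ a) with h | h <;> rw [h] <;> simp

lemma op_sgn_smul_sgn (a b : ℤ) (v : L) : sgn a • sgn b • v = sgn (a + b) • v := by
  rw [smul_smul, ← op_sgn_add]

/-- window predicate: `f` only depends on the first `n` entries -/
def Wnd (n : ℕ) (f : (ℕ → L) → L) : Prop :=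
  ∀ x y : ℕ → L, (∀ k, k < n → x k = y k) → f x = f y

lemma wnd_ex {n : ℕ} (F : C K L n) : Wnd n (ex F) := by
  intro x y h
  unfold ex
  congr 1
  funext j
  exact h j j.2

/-- insertion of a value at slot `i`, shifting by `n-1` -/
def ins (x : ℕ → L) (i n : ℕ) (v : L) : ℕ → L :=
  fun j => if j < i then x j else if j = i then v else x (j + n - 1)

lemma pc_def (n i : ℕ) (f g : (ℕ → L) → L) (x : ℕ → L) :
    pc n i f g x = sgn ((i : ℤ) * ((n : ℤ) - 1)) • f (ins x i n (g fun k => x (i + k))) := rfl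

lemma ins_restrict {N : ℕ} (x : ℕ → L) (i n : ℕ) (hi : i < N) (v : L) :
    (fun jj : Fin N => ins x i n v jj) =
      Function.update (fun jj : Fin N => if (jj : ℕ) < i then x jj else x (jj + n - 1)) ⟨i, hi⟩ v := by
  funext jj
  by_cases h1 : (jj : ℕ) = i
  · rw [show jj = ⟨i, hi⟩ from Fin.ext h1]
    simp [ins]
  · rw [Function.update_of_ne (fun hh => h1 (by rw [hh]))]
    simp only [ins]
    rw [if_neg h1]

def insHom {N : ℕ} (F : C K L N) (x : ℕ → L) (i n : ℕ) (hi : i < N) : L →+ L :=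
  AddMonoidHom.mk' (fun v => ex F (ins x i n v)) (by
    intro v w
    show F _ = F _ + F _
    simp only [ins_restrict x i n hi]
    exact F.map_update_add _ _ _ _)

lemma ex_ins_eq_hom {N : ℕ} (F : C K L N) (x : ℕ → L) (i n : ℕ) (hi : i < N) (v : L) :
    ex F (ins x i n v) = insHom F x i n hi v := rfl

lemma ex_ins_zsmul {N : ℕ} (F : C K L N) (x : ℕ → L) {i : ℕ} (n : ℕ) (hi : i < N) (c : ℤ) (v : L) :
    ex F (ins x i n (c • v)) = c • ex F (ins x i n v) := by
  rw [ex_ins_eq_hom F x i n hi, ex_ins_eq_hom F x i n hi]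
  exact map_zsmul (insHom F x i n hi) c v

lemma ex_ins_sub {N : ℕ} (F : C K L N) (x : ℕ → L) {i : ℕ} (n : ℕ) (hi : i < N) (v w : L) :
    ex F (ins x i n (v - w)) = ex F (ins x i n v) - ex F (ins x i n w) := by
  rw [ex_ins_eq_hom F x i n hi, ex_ins_eq_hom F x i n hi, ex_ins_eq_hom F x i n hi]
  exact map_sub (insHom F x i n hi) v w

lemma ex_ins_neg {N : ℕ} (F : C K L N) (x : ℕ → L) {i : ℕ} (n : ℕ) (hi : i < N) (v : L) :
    ex F (ins x i n (-v)) = - ex F (ins x i n v) := by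
  rw [ex_ins_eq_hom F x i n hi, ex_ins_eq_hom F x i n hi]
  exact map_neg (insHom F x i n hi) v

lemma ex_ins_zero {N : ℕ} (F : C K L N) (x : ℕ → L) {i : ℕ} (n : ℕ) (hi : i < N) :
    ex F (ins x i n 0) = 0 := by
  rw [ex_ins_eq_hom F x i n hi]
  exact map_zero (insHom F x i n hi)

lemma ex_ins_sum {N : ℕ} (F : C K L N) (x : ℕ → L) {i : ℕ} (n : ℕ) (hi : i < N)
    {ι : Type*} (s : Finset ι) (v : ι → L) :
    ex F (ins x i n (∑ t ∈ s, v t)) = ∑ t ∈ s, ex F (ins x i n (v t)) := by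
  rw [ex_ins_eq_hom F x i n hi]
  rw [map_sum]
  rfl

lemma pc_par {b p : ℕ} (f g h : (ℕ → L) → L) (hh : Wnd p h) {i j : ℕ} (hji : j < i) (x : ℕ → L) :
    pc p j (pc b i f g) h x
      = sgn (((b : ℤ) - 1) * ((p : ℤ) - 1)) • pc b (i + p - 1) (pc p j f h) g x := by
  simp only [pc_def]
  rw [op_sgn_smul_sgn, op_sgn_smul_sgn, op_sgn_smul_sgn]
  have hg1 : (fun k => ins x j p (h fun k' => x (j + k')) (i + k)) = (fun k => x (i + p - 1 + k)) := by
    funext k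
    simp only [ins]
    rw [if_neg (by omega), if_neg (by omega)]
    exact congrArg x (by omega)
  have hh2 : h (fun k => ins x (i + p - 1) b (g fun k' => x (i + p - 1 + k')) (j + k))
      = h (fun k => x (j + k)) := by
    apply hh
    intro k hk
    simp only [ins]
    rw [if_pos (by omega)]
  rw [hg1, hh2]
  rw [show sgn ((j : ℤ) * ((p : ℤ) - 1) + (i : ℤ) * ((b : ℤ) - 1))
      = sgn (((b : ℤ) - 1) * ((p : ℤ) - 1) + ((i + p - 1 : ℕ) : ℤ) * ((b : ℤ) - 1) + (j : ℤ) * ((p : ℤ) - 1)) from by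
    have c1 : ((i + p - 1 : ℕ) : ℤ) = (i : ℤ) + (p : ℤ) - 1 := by omega
    rw [c1, show ((b:ℤ)-1)*((p:ℤ)-1) + (((i:ℤ)+(p:ℤ)-1) * ((b:ℤ)-1)) + (j:ℤ)*((p:ℤ)-1)
        = ((j:ℤ)*((p:ℤ)-1) + (i:ℤ)*((b:ℤ)-1)) + 2*(((b:ℤ)-1)*((p:ℤ)-1)) from by ring,
      op_sgn_add_two_mul]]
  congr 1
  refine congrArg _ ?_
  funext t
  simp only [ins]
  split_ifs <;> first | rfl | (exact congrArg x (by omega)) | (exfalso; omega)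

lemma pc_seq {a b p : ℕ} (F : C K L a) (g h : (ℕ → L) → L) {i j : ℕ}
    (hia : i < a) (hij : i ≤ j) (hjb : j < i + b) (x : ℕ → L) :
    pc p j (pc b i (ex F) g) h x = pc (b + p - 1) i (ex F) (pc p (j - i) g h) x := by
  simp only [pc_def]
  rw [ex_ins_zsmul F x (b + p - 1) hia]
  rw [op_sgn_smul_sgn, op_sgn_smul_sgn]
  have hS : (fun k => ins x j p (h fun k' => x (j + k')) (i + k))
      = ins (fun k => x (i + k)) (j - i) p (h fun k => x (i + (j - i + k))) := by
    funext k
    simp only [ins]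
    by_cases h1 : k < j - i
    · rw [if_pos (by omega : i + k < j), if_pos h1]
    · by_cases h2 : k = j - i
      · rw [if_neg (by omega), if_pos (by omega : i + k = j), if_neg h1, if_pos h2]
        exact congrArg h (funext fun k' => congrArg x (by omega))
      · rw [if_neg (by omega), if_neg (by omega : ¬ i + k = j), if_neg h1, if_neg h2]
        exact congrArg x (by omega)
  rw [show sgn ((j : ℤ) * ((p : ℤ) - 1) + (i : ℤ) * ((b : ℤ) - 1))
      = sgn ((i : ℤ) * (((b + p - 1 : ℕ) : ℤ) - 1) + ((j - i : ℕ) : ℤ) * ((p : ℤ) - 1)) from by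
    have c1 : ((b + p - 1 : ℕ) : ℤ) = (b : ℤ) + (p : ℤ) - 1 := by omega
    have c2 : ((j - i : ℕ) : ℤ) = (j : ℤ) - (i : ℤ) := by omega
    rw [c1, c2]
    congr 1
    ring]
  rw [hS]
  congr 1
  refine congrArg _ ?_
  funext t
  simp only [ins]
  split_ifs <;> first | rfl | (exact congrArg x (by omega)) | (exfalso; omega)

lemma pc_parr {b c : ℕ} (f g h : (ℕ → L) → L) (hg : Wnd b g) {i j : ℕ} (hij : i + b ≤ j) (x : ℕ → L) :
    pc c j (pc b i f g) h x = sgn (((b : ℤ) - 1) * ((c : ℤ) - 1)) • pc b i (pc c (j - b + 1) f h) g x := by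
  have h0 := pc_par (b := c) (p := b) f h g hg (i := j - b + 1) (j := i) (by omega) x
  rw [show j - b + 1 + b - 1 = j from by omega] at h0
  rw [h0, op_sgn_smul_sgn,
    show ((b : ℤ) - 1) * ((c : ℤ) - 1) + ((c : ℤ) - 1) * ((b : ℤ) - 1)
      = 0 + 2 * (((b : ℤ) - 1) * ((c : ℤ) - 1)) from by ring,
    op_sgn_add_two_mul, op_sgn_zero, one_smul]

lemma pc_inner_sum {a : ℕ} (F : C K L a) {i : ℕ} (hi : i < a) (N : ℕ)
    {ι : Type*} (s : Finset ι) (G : ι → (ℕ → L) → L) (x : ℕ → L) :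
    pc N i (ex F) (fun y => ∑ t ∈ s, G t y) x = ∑ t ∈ s, pc N i (ex F) (G t) x := by
  simp only [pc_def]
  rw [ex_ins_sum F x N hi, Finset.smul_sum]

lemma tc_outer_sub_smul (M N : ℕ) (φ ψ g : (ℕ → L) → L) (c : ℤ) (x : ℕ → L) :
    tc M N (fun y => φ y - c • ψ y) g x = tc M N φ g x - c • tc M N ψ g x := by
  simp only [tc, pc_def, smul_sub, smul_smul, Finset.sum_sub_distrib, Finset.smul_sum]
  simp only [mul_comm]

lemma tc_outer_neg_sub_smul (M N : ℕ) (φ ψ g : (ℕ → L) → L) (c : ℤ) (x : ℕ → L) :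
    tc M N (fun y => -(φ y - c • ψ y)) g x = -(tc M N φ g x - c • tc M N ψ g x) := by
  simp only [tc, pc_def, smul_neg, smul_sub, smul_smul, Finset.sum_neg_distrib,
    Finset.sum_sub_distrib, Finset.smul_sum]
  simp only [mul_comm]

lemma tc_inner_sub_smul {a : ℕ} (F : C K L a) (N : ℕ) (φ ψ : (ℕ → L) → L) (c : ℤ) (x : ℕ → L) :
    tc a N (ex F) (fun y => φ y - c • ψ y) x = tc a N (ex F) φ x - c • tc a N (ex F) ψ x := by
  simp only [tc]
  have e : ∀ i ∈ range a, pc N i (ex F) (fun y => φ y - c • ψ y) x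
      = pc N i (ex F) φ x - c • pc N i (ex F) ψ x := by
    intro i hi
    rw [mem_range] at hi
    simp only [pc_def]
    rw [ex_ins_sub F x N hi, ex_ins_zsmul F x N hi, smul_sub, smul_comm]
  rw [Finset.sum_congr rfl e, Finset.sum_sub_distrib, Finset.smul_sum]

lemma tc_inner_neg_sub_smul {a : ℕ} (F : C K L a) (N : ℕ) (φ ψ : (ℕ → L) → L) (c : ℤ) (x : ℕ → L) :
    tc a N (ex F) (fun y => -(φ y - c • ψ y)) x = -(tc a N (ex F) φ x - c • tc a N (ex F) ψ x) := by
  simp only [tc]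
  have e : ∀ i ∈ range a, pc N i (ex F) (fun y => -(φ y - c • ψ y)) x
      = -(pc N i (ex F) φ x - c • pc N i (ex F) ψ x) := by
    intro i hi
    rw [mem_range] at hi
    simp only [pc_def]
    rw [ex_ins_neg F x N hi, ex_ins_sub F x N hi, ex_ins_zsmul F x N hi, smul_neg, smul_sub,
      smul_comm]
  rw [Finset.sum_congr rfl e, Finset.sum_neg_distrib, Finset.sum_sub_distrib, Finset.smul_sum]

lemma tc_inner_zero {a : ℕ} (F : C K L a) (N : ℕ) (ψ : (ℕ → L) → L) (hψ : ∀ y, ψ y = 0)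
    (x : ℕ → L) : tc a N (ex F) ψ x = 0 := by
  simp only [tc, pc_def]
  refine Finset.sum_eq_zero fun i hi => ?_
  rw [mem_range] at hi
  rw [hψ, ex_ins_zero F x N hi, smul_zero]

lemma sum_tri {M : Type*} [AddCommMonoid M] (a : ℕ) (f : ℕ → ℕ → M) :
    ∑ i ∈ range a, ∑ j ∈ range i, f i j = ∑ j ∈ range a, ∑ i ∈ Ico (j + 1) a, f i j := by
  induction a with
  | zero => simp
  | succ a ih =>
    rw [Finset.sum_range_succ, ih]
    symm
    rw [Finset.sum_range_succ]
    simp only [Finset.Ico_self, Finset.sum_empty, add_zero]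
    rw [Finset.sum_congr rfl
      (fun j hj => Finset.sum_Ico_succ_top (by rw [mem_range] at hj; omega) (fun i => f i j))]
    rw [Finset.sum_add_distrib]

lemma assoc_eq (a b c : ℕ) (F : C K L a) (g h : (ℕ → L) → L) (hg : Wnd b g) (hh : Wnd c h)
    (x : ℕ → L) :
    tc (a + b - 1) c (tc a b (ex F) g) h x
      = tc a (b + c - 1) (ex F) (tc b c g h) x + br2 a b c (ex F) g h x
        + sgn (((b : ℤ) - 1) * ((c : ℤ) - 1)) • br2 a c b (ex F) h g x := by
  have hA : tc (a + b - 1) c (tc a b (ex F) g) h x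
      = ∑ i ∈ range a, ∑ j ∈ range (a + b - 1), pc c j (pc b i (ex F) g) h x := by
    rw [Finset.sum_comm]
    simp only [tc, pc_def, Finset.smul_sum]
  have hsplit : ∀ i ∈ range a,
      ∑ j ∈ range (a + b - 1), pc c j (pc b i (ex F) g) h x
        = (∑ j ∈ range i, pc c j (pc b i (ex F) g) h x)
          + pc (b + c - 1) i (ex F) (tc b c g h) x
          + ∑ j ∈ Ico (i + b) (a + b - 1), pc c j (pc b i (ex F) g) h x := by
    intro i hi
    rw [mem_range] at hi
    have e1 : ∑ j ∈ Ico i (i + b), pc c j (pc b i (ex F) g) h x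
        = pc (b + c - 1) i (ex F) (tc b c g h) x := by
      rw [Finset.sum_Ico_eq_sum_range]
      simp only [Nat.add_sub_cancel_left]
      have e2 : ∀ k ∈ range b, pc c (i + k) (pc b i (ex F) g) h x
          = pc (b + c - 1) i (ex F) (pc c k g h) x := by
        intro k hk
        rw [mem_range] at hk
        rw [pc_seq F g h hi (by omega) (by omega) x, Nat.add_sub_cancel_left]
      rw [Finset.sum_congr rfl e2,
        ← pc_inner_sum F hi (b + c - 1) (range b) (fun k => pc c k g h) x]
      rfl
    rw [range_eq_Ico, ← Finset.sum_Ico_consecutive _ (by omega : 0 ≤ i + b)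
        (by omega : i + b ≤ a + b - 1),
      ← Finset.sum_Ico_consecutive _ (by omega : 0 ≤ i) (by omega : i ≤ i + b), e1,
      ← Finset.range_eq_Ico]
  rw [hA, Finset.sum_congr rfl hsplit]
  simp only [Finset.sum_add_distrib]
  have hseq : ∑ i ∈ range a, pc (b + c - 1) i (ex F) (tc b c g h) x
      = tc a (b + c - 1) (ex F) (tc b c g h) x := rfl
  have hright : ∑ i ∈ range a, ∑ j ∈ Ico (i + b) (a + b - 1), pc c j (pc b i (ex F) g) h x
      = br2 a b c (ex F) g h x := by
    rcases Nat.eq_zero_or_pos a with rfl | ha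
    · simp [br2]
    obtain ⟨a', rfl⟩ : ∃ a', a = a' + 1 := ⟨a - 1, by omega⟩
    rw [Finset.sum_range_succ, show a' + 1 + b - 1 = a' + b from by omega]
    simp only [Finset.Ico_self, Finset.sum_empty, add_zero]
    show _ = br2 (a' + 1) b c (ex F) g h x
    refine Finset.sum_congr rfl fun i hi => ?_
    rw [mem_range] at hi
    refine Finset.sum_congr ?_ fun _ _ => rfl
    rw [← Finset.Ico_add_one_right_eq_Icc]
    congr 1
    omega
  have hleft : ∑ i ∈ range a, ∑ j ∈ range i, pc c j (pc b i (ex F) g) h x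
      = sgn (((b : ℤ) - 1) * ((c : ℤ) - 1)) • br2 a c b (ex F) h g x := by
    have e3 : ∀ i ∈ range a, ∑ j ∈ range i, pc c j (pc b i (ex F) g) h x
        = ∑ j ∈ range i,
            sgn (((b : ℤ) - 1) * ((c : ℤ) - 1)) • pc b (i + c - 1) (pc c j (ex F) h) g x :=
      fun i _ => Finset.sum_congr rfl fun j hj => pc_par (ex F) g h hh (mem_range.1 hj) x
    rw [Finset.sum_congr rfl e3]
    simp only [← Finset.smul_sum]
    congr 1
    rw [sum_tri a (fun i j => pc b (i + c - 1) (pc c j (ex F) h) g x)]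
    rcases Nat.eq_zero_or_pos a with rfl | ha
    · simp [br2]
    obtain ⟨a', rfl⟩ : ∃ a', a = a' + 1 := ⟨a - 1, by omega⟩
    rw [Finset.sum_range_succ]
    simp only [Finset.Ico_self, Finset.sum_empty, add_zero]
    show _ = br2 (a' + 1) c b (ex F) h g x
    refine Finset.sum_congr rfl fun j hj => ?_
    rw [mem_range] at hj
    rw [Finset.sum_Ico_eq_sum_range,
      show Icc (j + c) (a' + 1 + c - 2) = Ico (j + c) (a' + c) from by
        rw [← Finset.Ico_add_one_right_eq_Icc]; congr 1; omega,
      Finset.sum_Ico_eq_sum_range,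
      show a' + 1 - (j + 1) = a' - j from by omega,
      show a' + c - (j + c) = a' - j from by omega]
    refine Finset.sum_congr rfl fun t ht => ?_
    rw [mem_range] at ht
    congr 1
    omega
  rw [hseq, hright, hleft]
  abel

lemma assoc_symm (a b c : ℕ) (F : C K L a) (g h : (ℕ → L) → L) (hg : Wnd b g) (hh : Wnd c h)
    (x : ℕ → L) :
    tc (a + b - 1) c (tc a b (ex F) g) h x - tc a (b + c - 1) (ex F) (tc b c g h) x
      = sgn (((b : ℤ) - 1) * ((c : ℤ) - 1)) •
        (tc (a + c - 1) b (tc a c (ex F) h) g x - tc a (c + b - 1) (ex F) (tc c b h g) x) := by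
  rw [assoc_eq a b c F g h hg hh x, assoc_eq a c b F h g hh hg x]
  have key : ∀ X B1 B2 : L, (X + B1 + B2) - X = B1 + B2 := fun _ _ _ => by abel
  rw [key, key, smul_add, smul_smul,
    show sgn (((b : ℤ) - 1) * ((c : ℤ) - 1)) * sgn (((c : ℤ) - 1) * ((b : ℤ) - 1)) = 1 from by
      rw [← op_sgn_add, show ((b : ℤ) - 1) * ((c : ℤ) - 1) + ((c : ℤ) - 1) * ((b : ℤ) - 1)
          = 0 + 2 * (((b : ℤ) - 1) * ((c : ℤ) - 1)) from by ring, op_sgn_add_two_mul, op_sgn_zero],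
    one_smul]
  exact add_comm _ _

end Aux

/-- the coboundary operator is a right derivation of the
commutator algebra: `δ_μ [f,g] = (-1)^{|g|} [δ_μ f, g] + [f, δ_μ g]`. -/
theorem coboundary_right_derivation_of_bracket
    (μ : C K L 2) {m n : ℕ} (f : C K L m) (g : C K L n) :
    delta μ (m + n - 1) (gb m n (ex f) (ex g))
      = sgn ((n : ℤ) - 1) • gb (m + 1) n (delta μ m (ex f)) (ex g)
          + gb m (n + 1) (ex f) (delta μ n (ex g)) := by
  funext x
  simp only [Pi.add_apply, Pi.smul_apply]
  have h2cast : (((2:ℕ):ℤ)) - 1 = 1 := by norm_num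
  have H1 :
      tc (m + n - 1) 2 (tc m n (ex f) (ex g)) (ex μ) x
        - tc m (n + 1) (ex f) (tc n 2 (ex g) (ex μ)) x
      = sgn ((n : ℤ) - 1) •
          (tc (m + 1) n (tc m 2 (ex f) (ex μ)) (ex g) x
            - tc m (n + 1) (ex f) (tc 2 n (ex μ) (ex g)) x) := by
    have h0 := assoc_symm m n 2 f (ex g) (ex μ) (wnd_ex g) (wnd_ex μ) x
    rw [show (2 + n - 1 : ℕ) = n + 1 from by omega, h2cast, mul_one] at h0
    exact h0
  have H2 :
      tc (m + n - 1) 2 (tc n m (ex g) (ex f)) (ex μ) x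
        - tc n (m + 1) (ex g) (tc m 2 (ex f) (ex μ)) x
      = sgn ((m : ℤ) - 1) •
          (tc (n + 1) m (tc n 2 (ex g) (ex μ)) (ex f) x
            - tc n (m + 1) (ex g) (tc 2 m (ex μ) (ex f)) x) := by
    have h0 := assoc_symm n m 2 g (ex f) (ex μ) (wnd_ex f) (wnd_ex μ) x
    rw [show (n + m - 1 : ℕ) = m + n - 1 from by omega,
      show (2 + m - 1 : ℕ) = m + 1 from by omega, h2cast, mul_one] at h0
    exact h0
  have H3 :
      tc (m + 1) n (tc 2 m (ex μ) (ex f)) (ex g) x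
        - tc 2 (m + n - 1) (ex μ) (tc m n (ex f) (ex g)) x
      = sgn (((m : ℤ) - 1) * ((n : ℤ) - 1)) •
          (tc (n + 1) m (tc 2 n (ex μ) (ex g)) (ex f) x
            - tc 2 (m + n - 1) (ex μ) (tc n m (ex g) (ex f)) x) := by
    have h0 := assoc_symm 2 m n μ (ex f) (ex g) (wnd_ex f) (wnd_ex g) x
    rw [show (2 + m - 1 : ℕ) = m + 1 from by omega,
      show (2 + n - 1 : ℕ) = n + 1 from by omega,
      show (n + m - 1 : ℕ) = m + n - 1 from by omega] at h0
    exact h0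
  have hT1 : tc (m + n - 1) 2 (gb m n (ex f) (ex g)) (ex μ) x
      = tc (m + n - 1) 2 (tc m n (ex f) (ex g)) (ex μ) x
        - sgn (((m : ℤ) - 1) * ((n : ℤ) - 1)) •
            tc (m + n - 1) 2 (tc n m (ex g) (ex f)) (ex μ) x :=
    tc_outer_sub_smul (m + n - 1) 2 (tc m n (ex f) (ex g)) (tc n m (ex g) (ex f)) (ex μ) _ x
  have hT2 : tc 2 (m + n - 1) (ex μ) (gb m n (ex f) (ex g)) x
      = tc 2 (m + n - 1) (ex μ) (tc m n (ex f) (ex g)) x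
        - sgn (((m : ℤ) - 1) * ((n : ℤ) - 1)) •
            tc 2 (m + n - 1) (ex μ) (tc n m (ex g) (ex f)) x :=
    tc_inner_sub_smul μ (m + n - 1) (tc m n (ex f) (ex g)) (tc n m (ex g) (ex f)) _ x
  have hσ : sgn ((((m + n - 1 : ℕ) : ℤ)) - 1) •
        (tc 2 (m + n - 1) (ex μ) (tc m n (ex f) (ex g)) x
          - sgn (((m : ℤ) - 1) * ((n : ℤ) - 1)) •
              tc 2 (m + n - 1) (ex μ) (tc n m (ex g) (ex f)) x)
      = (sgn ((m : ℤ) - 1) * sgn ((n : ℤ) - 1)) •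
        (tc 2 (m + n - 1) (ex μ) (tc m n (ex f) (ex g)) x
          - sgn (((m : ℤ) - 1) * ((n : ℤ) - 1)) •
              tc 2 (m + n - 1) (ex μ) (tc n m (ex g) (ex f)) x) := by
    by_cases hmn : 1 ≤ m + n
    · congr 1
      rw [show (((m + n - 1 : ℕ) : ℤ)) - 1 = ((m : ℤ) - 1) + ((n : ℤ) - 1) from by omega,
        op_sgn_add]
    · have hm : m = 0 := by omega
      have hn : n = 0 := by omega
      subst hm; subst hn
      rw [tc_inner_zero μ _ _ (fun y => by simp [tc]) x,
        tc_inner_zero μ _ _ (fun y => by simp [tc]) x]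
      simp
  have HL : delta μ (m + n - 1) (gb m n (ex f) (ex g)) x
      = -(tc (m + n - 1) 2 (tc m n (ex f) (ex g)) (ex μ) x)
        + sgn (((m : ℤ) - 1) * ((n : ℤ) - 1)) •
            tc (m + n - 1) 2 (tc n m (ex g) (ex f)) (ex μ) x
        + (sgn ((m : ℤ) - 1) * sgn ((n : ℤ) - 1)) •
            tc 2 (m + n - 1) (ex μ) (tc m n (ex f) (ex g)) x
        - ((sgn ((m : ℤ) - 1) * sgn ((n : ℤ) - 1)) * sgn (((m : ℤ) - 1) * ((n : ℤ) - 1))) •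
            tc 2 (m + n - 1) (ex μ) (tc n m (ex g) (ex f)) x := by
    show -(tc (m + n - 1) 2 (gb m n (ex f) (ex g)) (ex μ) x
        - sgn ((((m + n - 1 : ℕ) : ℤ) - 1) * (((2:ℕ):ℤ) - 1)) •
          tc 2 (m + n - 1) (ex μ) (gb m n (ex f) (ex g)) x) = _
    rw [h2cast, mul_one, hT1, hT2, hσ]
    module
  have hT5 : tc (m + 1) n (delta μ m (ex f)) (ex g) x
      = -(tc (m + 1) n (tc m 2 (ex f) (ex μ)) (ex g) x
          - sgn (((m : ℤ) - 1) * (((2:ℕ):ℤ) - 1)) •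
              tc (m + 1) n (tc 2 m (ex μ) (ex f)) (ex g) x) :=
    tc_outer_neg_sub_smul (m + 1) n (tc m 2 (ex f) (ex μ)) (tc 2 m (ex μ) (ex f)) (ex g) _ x
  rw [h2cast, mul_one] at hT5
  have hT7 : tc n (m + 1) (ex g) (delta μ m (ex f)) x
      = -(tc n (m + 1) (ex g) (tc m 2 (ex f) (ex μ)) x
          - sgn (((m : ℤ) - 1) * (((2:ℕ):ℤ) - 1)) •
              tc n (m + 1) (ex g) (tc 2 m (ex μ) (ex f)) x) :=
    tc_inner_neg_sub_smul g (m + 1) (tc m 2 (ex f) (ex μ)) (tc 2 m (ex μ) (ex f)) _ x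
  rw [h2cast, mul_one] at hT7
  have HR1 : gb (m + 1) n (delta μ m (ex f)) (ex g) x
      = -(tc (m + 1) n (tc m 2 (ex f) (ex μ)) (ex g) x)
        + sgn ((m : ℤ) - 1) • tc (m + 1) n (tc 2 m (ex μ) (ex f)) (ex g) x
        + (sgn (((m : ℤ) - 1) * ((n : ℤ) - 1)) * sgn ((n : ℤ) - 1)) •
            tc n (m + 1) (ex g) (tc m 2 (ex f) (ex μ)) x
        - ((sgn (((m : ℤ) - 1) * ((n : ℤ) - 1)) * sgn ((n : ℤ) - 1)) * sgn ((m : ℤ) - 1)) •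
            tc n (m + 1) (ex g) (tc 2 m (ex μ) (ex f)) x := by
    show tc (m + 1) n (delta μ m (ex f)) (ex g) x
        - sgn ((((m + 1 : ℕ) : ℤ) - 1) * ((n : ℤ) - 1)) •
            tc n (m + 1) (ex g) (delta μ m (ex f)) x = _
    rw [show (((m + 1 : ℕ) : ℤ)) - 1 = (m : ℤ) from by push_cast; ring,
      show (m : ℤ) * ((n : ℤ) - 1) = ((m : ℤ) - 1) * ((n : ℤ) - 1) + ((n : ℤ) - 1) from by ring,
      op_sgn_add, hT5, hT7]
    module
  have hT9 : tc m (n + 1) (ex f) (delta μ n (ex g)) x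
      = -(tc m (n + 1) (ex f) (tc n 2 (ex g) (ex μ)) x
          - sgn (((n : ℤ) - 1) * (((2:ℕ):ℤ) - 1)) •
              tc m (n + 1) (ex f) (tc 2 n (ex μ) (ex g)) x) :=
    tc_inner_neg_sub_smul f (n + 1) (tc n 2 (ex g) (ex μ)) (tc 2 n (ex μ) (ex g)) _ x
  rw [h2cast, mul_one] at hT9
  have hT11 : tc (n + 1) m (delta μ n (ex g)) (ex f) x
      = -(tc (n + 1) m (tc n 2 (ex g) (ex μ)) (ex f) x
          - sgn (((n : ℤ) - 1) * (((2:ℕ):ℤ) - 1)) •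
              tc (n + 1) m (tc 2 n (ex μ) (ex g)) (ex f) x) :=
    tc_outer_neg_sub_smul (n + 1) m (tc n 2 (ex g) (ex μ)) (tc 2 n (ex μ) (ex g)) (ex f) _ x
  rw [h2cast, mul_one] at hT11
  have HR2 : gb m (n + 1) (ex f) (delta μ n (ex g)) x
      = -(tc m (n + 1) (ex f) (tc n 2 (ex g) (ex μ)) x)
        + sgn ((n : ℤ) - 1) • tc m (n + 1) (ex f) (tc 2 n (ex μ) (ex g)) x
        + (sgn (((m : ℤ) - 1) * ((n : ℤ) - 1)) * sgn ((m : ℤ) - 1)) •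
            tc (n + 1) m (tc n 2 (ex g) (ex μ)) (ex f) x
        - ((sgn (((m : ℤ) - 1) * ((n : ℤ) - 1)) * sgn ((m : ℤ) - 1)) * sgn ((n : ℤ) - 1)) •
            tc (n + 1) m (tc 2 n (ex μ) (ex g)) (ex f) x := by
    show tc m (n + 1) (ex f) (delta μ n (ex g)) x
        - sgn (((m : ℤ) - 1) * (((n + 1 : ℕ) : ℤ) - 1)) •
            tc (n + 1) m (delta μ n (ex g)) (ex f) x = _
    rw [show (((n + 1 : ℕ) : ℤ)) - 1 = (n : ℤ) from by push_cast; ring,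
      show ((m : ℤ) - 1) * (n : ℤ) = ((m : ℤ) - 1) * ((n : ℤ) - 1) + ((m : ℤ) - 1) from by ring,
      op_sgn_add, hT9, hT11]
    module
  have e1 := sub_eq_iff_eq_add.mp H1
  have e2 := sub_eq_iff_eq_add.mp H2
  have e3 := sub_eq_iff_eq_add.mp H3
  rw [HL, HR1, HR2, e1, e2, e3]
  obtain hα | hα := op_sgn_cases ((m : ℤ) - 1) <;>
    obtain hβ | hβ := op_sgn_cases ((n : ℤ) - 1) <;>
      obtain hγ | hγ := op_sgn_cases (((m : ℤ) - 1) * ((n : ℤ) - 1)) <;>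
        simp only [hα, hβ, hγ] <;> module


end OperadPrelude
end
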